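/- For every natural number n, the 2^n closed intervals Set.Icc (1 + (s k)/3^n) (1 + (s k + 1)/3^n), for 0 ≤ k ≤ 2^n − 1, are pairwise disjoint; indeed for all k < l < 2^n one has s k + 1 < s l. -/
import Mathlib


noncomputable section

/-- `s k = Σᵢ 2·tᵢ·3ⁱ` where `k = Σᵢ tᵢ·2ⁱ` is the binary expansion of `k`;
equivalently `s 0 = 0`, `s (2j) = 3·(s j)`, `s (2j+1) = 3·(s j) + 2`. -/
def s : ℕ → ℕ
  | 0 => 0
  | k + 1 =>
    if (k + 1) % 2 = 0 then 3 * s ((k + 1) / 2)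
    else 3 * s ((k + 1) / 2) + 2
decreasing_by all_goals (simp_wf; omega)

lemma s_even (j : ℕ) : s (2 * j) = 3 * s j := by
  cases j with
  | zero => simp [s]
  | succ m =>
    rw [show 2 * (m + 1) = (2 * m + 1) + 1 by ring, s]
    have h1 : (2 * m + 1 + 1) % 2 = 0 := by omega
    have h2 : (2 * m + 1 + 1) / 2 = m + 1 := by omega
    simp [h1, h2]

lemma s_odd (j : ℕ) : s (2 * j + 1) = 3 * s j + 2 := by
  rw [show 2 * j + 1 = (2 * j) + 1 by ring, s]
  have h1 : (2 * j + 1) % 2 = 1 := by omega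
  have h2 : (2 * j + 1) / 2 = j := by omega
  simp [h1, h2]

lemma s_gap : ∀ k : ℕ, s k + 2 ≤ s (k + 1) := by
  intro k
  induction k using Nat.strong_induction_on with
  | _ k ih =>
    rcases Nat.even_or_odd k with ⟨j, hj⟩ | ⟨j, hj⟩
    · subst hj
      rw [show j + j = 2 * j by ring, s_even, s_odd]
    · subst hj
      rw [show 2 * j + 1 + 1 = 2 * (j + 1) by ring, s_odd, s_even]
      have := ih j (by omega)
      omega

lemma s_strict : ∀ k l : ℕ, k < l → s k + 1 < s l := by
  intro k l hkl
  induction l with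
  | zero => omega
  | succ m ih =>
    have h := s_gap m
    rcases Nat.lt_or_ge k m with h' | h'
    · have := ih h'; omega
    · have : k = m := by omega
      subst this; omega

/-- For each `n`, the `2^n` closed intervals `[1 + s k / 3^n, 1 + (s k + 1)/3^n]`,
`0 ≤ k ≤ 2^n − 1`, are pairwise disjoint; indeed `s k + 1 < s l` whenever `k < l < 2^n`. -/
theorem stmt_1 (n : ℕ) :
    (∀ k l : ℕ, k < l → l < 2 ^ n → s k + 1 < s l) ∧
    (∀ k l : ℕ, k < 2 ^ n → l < 2 ^ n → k ≠ l →
      Disjoint (Set.Icc (1 + (s k : ℝ) / 3 ^ n) (1 + ((s k : ℝ) + 1) / 3 ^ n))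
        (Set.Icc (1 + (s l : ℝ) / 3 ^ n) (1 + ((s l : ℝ) + 1) / 3 ^ n))) := by
  have hpow : (0:ℝ) < 3 ^ n := by positivity
  have key : ∀ k l : ℕ, k < l →
      Disjoint (Set.Icc (1 + (s k : ℝ) / 3 ^ n) (1 + ((s k : ℝ) + 1) / 3 ^ n))
        (Set.Icc (1 + (s l : ℝ) / 3 ^ n) (1 + ((s l : ℝ) + 1) / 3 ^ n)) := by
    intro k l hkl
    apply Set.disjoint_left.mpr
    rintro x ⟨_, hx2⟩ ⟨hx3, _⟩
    have h : (s k : ℝ) + 1 < s l := by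
      have := s_strict k l hkl
      exact_mod_cast this
    have : ((s k : ℝ) + 1) / 3 ^ n < (s l : ℝ) / 3 ^ n := by gcongr
    linarith
  refine ⟨fun k l hkl _ => s_strict k l hkl, fun k l _ _ hne => ?_⟩
  rcases Nat.lt_or_ge k l with h | h
  · exact key k l h
  · exact (key l k (by omega)).symm
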